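/- Let Δ_w = Δ⁰ + w·A + w²·B (w ∈ ℝ) be a quadratic pencil of operators on C^∞(ℝⁿ), where Δ⁰f = (1/2)·Σ_{a,b} S^{ab} ∂_a∂_b f + Σ_a T^a ∂_a f + R·f is a second-order operator with smooth coefficients and S^{ab} = S^{ba}, A is a first-order operator Af = Σ_a α^a ∂_a f + β·f with smooth coefficients, and B is multiplication by a smooth function κ. Suppose the pencil satisfies the self-adjointness condition: for all w ∈ ℝ and all compactly supported smooth f, g on ℝⁿ, ∫ (Δ_w f)·g dx = ∫ f·(Δ_{1−w} g) dx. Then necessarily α^a = γ^a := Σ_b ∂_b S^{ba} − 2T^a and β = (1/2)·Σ_a ∂_a γ^a − κ, and consequently Δ_w = R·id + Δ_w^{can}, where Δ_w^{can} is the canonical pencil built from the data (S^{ab}, γ^a, θ) with θ = 2κ. In particular, if Δ₀(1) = 0 then the pencil is exactly the canonical pencil of (S^{ab}, γ^a, 2κ). -/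

import Mathlib

open scoped BigOperators

/-- Partial derivative `∂_a f` of a function on `ℝⁿ`. -/
noncomputable def pd {n : ℕ} (a : Fin n) (f : (Fin n → ℝ) → ℝ) : (Fin n → ℝ) → ℝ :=
  fun x => fderiv ℝ f x (Pi.single a 1)

/-- The canonical pencil of operators associated to data `(S^{ab}, γ^a, θ)`:
`Δ_w f = (1/2)·(Σ_{a,b} S^{ab} ∂_a∂_b f + Σ_a (Σ_b ∂_b S^{ba} + (2w−1)γ^a) ∂_a f
  + (w·Σ_a ∂_a γ^a + w(w−1)·θ)·f)`. -/
noncomputable def canonicalPencil {n : ℕ} (S : Fin n → Fin n → (Fin n → ℝ) → ℝ)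
    (γ : Fin n → (Fin n → ℝ) → ℝ) (θ : (Fin n → ℝ) → ℝ) (w : ℝ)
    (f : (Fin n → ℝ) → ℝ) : (Fin n → ℝ) → ℝ :=
  fun x => (1/2) * ((∑ a, ∑ b, S a b x * pd a (pd b f) x)
    + (∑ a, ((∑ b, pd b (S b a) x) + (2 * w - 1) * γ a x) * pd a f x)
    + (w * (∑ a, pd a (γ a) x) + w * (w - 1) * θ x) * f x)

/-- The second-order differential operator
`Δ⁰f = (1/2)·Σ_{a,b} S^{ab} ∂_a∂_b f + Σ_a T^a ∂_a f + R·f`. -/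
noncomputable def secondOrderOp {n : ℕ} (S : Fin n → Fin n → (Fin n → ℝ) → ℝ)
    (T : Fin n → (Fin n → ℝ) → ℝ) (R : (Fin n → ℝ) → ℝ)
    (f : (Fin n → ℝ) → ℝ) : (Fin n → ℝ) → ℝ :=
  fun x => (1/2) * (∑ a, ∑ b, S a b x * pd a (pd b f) x)
    + (∑ a, T a x * pd a f x) + R x * f x

/-- The quadratic pencil `Δ_w = Δ⁰ + w·A + w²·B`, where `Δ⁰` is the second-order
operator with coefficients `S, T, R`, `A f = Σ_a α^a ∂_a f + β·f`, and `B` is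
multiplication by `κ`. -/
noncomputable def quadPencil {n : ℕ} (S : Fin n → Fin n → (Fin n → ℝ) → ℝ)
    (T : Fin n → (Fin n → ℝ) → ℝ) (R : (Fin n → ℝ) → ℝ)
    (α : Fin n → (Fin n → ℝ) → ℝ) (β κ : (Fin n → ℝ) → ℝ) (w : ℝ)
    (f : (Fin n → ℝ) → ℝ) : (Fin n → ℝ) → ℝ :=
  fun x => secondOrderOp S T R f x
    + w * ((∑ a, α a x * pd a f x) + β x * f x)
    + w ^ 2 * (κ x * f x)

open MeasureTheory

variable {n : ℕ}


abbrev Sm (f : (Fin n → ℝ) → ℝ) : Prop := ContDiff ℝ (⊤ : ℕ∞) f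

lemma Sm.pd {f : (Fin n → ℝ) → ℝ} (hf : Sm f) (a : Fin n) : Sm (pd a f) := by
  exact (hf.fderiv_right (m := (⊤:ℕ∞)) le_rfl).clm_apply contDiff_const

lemma Sm.diff {f : (Fin n → ℝ) → ℝ} (hf : Sm f) : Differentiable ℝ f :=
  hf.differentiable (by simp)

lemma Sm.cont {f : (Fin n → ℝ) → ℝ} (hf : Sm f) : Continuous f := hf.continuous

lemma pd_mul {f g : (Fin n → ℝ) → ℝ} (hf : Differentiable ℝ f) (hg : Differentiable ℝ g)
    (a : Fin n) :
    pd a (fun y => f y * g y) = fun x => pd a f x * g x + f x * pd a g x := by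
  funext x
  simp only [pd]
  rw [fderiv_fun_mul (hf x) (hg x)]
  simp only [ContinuousLinearMap.add_apply, ContinuousLinearMap.smul_apply, smul_eq_mul]
  ring

lemma pd_add {f g : (Fin n → ℝ) → ℝ} (hf : Differentiable ℝ f) (hg : Differentiable ℝ g)
    (a : Fin n) :
    pd a (fun y => f y + g y) = fun x => pd a f x + pd a g x := by
  funext x
  simp only [pd]
  rw [fderiv_fun_add (hf x) (hg x)]
  simp

lemma pd_sub {f g : (Fin n → ℝ) → ℝ} (hf : Differentiable ℝ f) (hg : Differentiable ℝ g)
    (a : Fin n) :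
    pd a (fun y => f y - g y) = fun x => pd a f x - pd a g x := by
  funext x
  simp only [pd]
  rw [fderiv_fun_sub (hf x) (hg x)]
  simp

lemma pd_const (a : Fin n) (c : ℝ) : pd a (fun _ => c) = fun _ => (0:ℝ) := by
  funext x; simp [pd]

lemma pd_const_mul {f : (Fin n → ℝ) → ℝ} (hf : Differentiable ℝ f) (a : Fin n) (c : ℝ) :
    pd a (fun y => c * f y) = fun x => c * pd a f x := by
  funext x
  simp only [pd]
  rw [fderiv_const_mul (hf x) c]
  simp

lemma pd_sum {ι : Type*} (s : Finset ι) (f : ι → (Fin n → ℝ) → ℝ)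
    (hf : ∀ i ∈ s, Differentiable ℝ (f i)) (a : Fin n) :
    pd a (fun y => ∑ i ∈ s, f i y) = fun x => ∑ i ∈ s, pd a (f i) x := by
  funext x
  simp only [pd]
  rw [fderiv_fun_sum (fun i hi => (hf i hi) x)]
  simp

lemma pd_hcs {f : (Fin n → ℝ) → ℝ} (hf : HasCompactSupport f) (a : Fin n) :
    HasCompactSupport (pd a f) := hf.fderiv_apply ℝ (Pi.single a 1)

lemma intg {u : (Fin n → ℝ) → ℝ} (hu : Continuous u) (hcs : HasCompactSupport u) :
    Integrable u := hu.integrable_of_hasCompactSupport hcs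

lemma ibp {c u : (Fin n → ℝ) → ℝ} (hc : Sm c) (hu : Sm u) (hcs : HasCompactSupport u)
    (a : Fin n) :
    ∫ x, c x * pd a u x = - ∫ x, pd a c x * u x := by
  have h1 : Integrable (fun x => pd a c x * u x) :=
    intg ((hc.pd a).cont.mul hu.cont) (hcs.mul_left)
  have h2 : Integrable (fun x => c x * pd a u x) :=
    intg (hc.cont.mul (hu.pd a).cont) ((pd_hcs hcs a).mul_left)
  have h3 : Integrable (fun x => c x * u x) :=
    intg (hc.cont.mul hu.cont) (hcs.mul_left)
  exact integral_mul_fderiv_eq_neg_fderiv_mul_of_integrable h1 h2 h3 (fun x _ => hc.diff x) (fun x _ => hu.diff x)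

lemma integral_expand (P : Fin n → Fin n → (Fin n → ℝ) → ℝ) (Q : Fin n → (Fin n → ℝ) → ℝ)
    (Z : (Fin n → ℝ) → ℝ)
    (hP : ∀ a b, Integrable (P a b)) (hQ : ∀ a, Integrable (Q a)) (hZ : Integrable Z) :
    ∫ x, ((1/2) * (∑ a, ∑ b, P a b x) + ((∑ a, Q a x) + Z x))
      = (1/2) * (∑ a, ∑ b, ∫ x, P a b x) + ((∑ a, ∫ x, Q a x) + ∫ x, Z x) := by
  have hPs : Integrable (fun x => ∑ a, ∑ b, P a b x) :=
    integrable_finset_sum _ (fun a _ => integrable_finset_sum _ (fun b _ => hP a b))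
  have hQs : Integrable (fun x => ∑ a, Q a x) :=
    integrable_finset_sum _ (fun a _ => hQ a)
  have hQZ : Integrable (fun x => (∑ a, Q a x) + Z x) := hQs.add hZ
  have hP2 : Integrable (fun x => (1/2 : ℝ) * ∑ a, ∑ b, P a b x) := hPs.const_mul _
  rw [integral_add hP2 hQZ, integral_add hQs hZ,
    integral_const_mul, integral_finset_sum _ (fun a _ => integrable_finset_sum _ (fun b _ => hP a b)),
    integral_finset_sum _ (fun a _ => hQ a)]
  congr 1
  congr 1
  exact Finset.sum_congr rfl (fun a _ => integral_finset_sum _ (fun b _ => hP a b))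

lemma ContDiff.pdSm {f : (Fin n → ℝ) → ℝ} (hf : ContDiff ℝ (⊤ : ℕ∞) f) (a : Fin n) :
    Sm (pd a f) := Sm.pd hf a

lemma ibp2 {c u : (Fin n → ℝ) → ℝ} (hc : Sm c) (hu : Sm u) (hcs : HasCompactSupport u)
    (a b : Fin n) :
    ∫ x, c x * pd a (pd b u) x = ∫ x, pd b (pd a c) x * u x := by
  rw [ibp hc (hu.pd b) (pd_hcs hcs b) a, ibp (hc.pd a) hu hcs b, neg_neg]

noncomputable def Dop (S : Fin n → Fin n → (Fin n → ℝ) → ℝ) (T : Fin n → (Fin n → ℝ) → ℝ)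
    (R : (Fin n → ℝ) → ℝ) (g : (Fin n → ℝ) → ℝ) : (Fin n → ℝ) → ℝ :=
  fun x => (1/2) * (∑ a, ∑ b, pd b (pd a (fun z => S a b z * g z)) x)
    + ((∑ a, -(pd a (fun z => T a z * g z) x)) + R x * g x)

lemma adjoint {S : Fin n → Fin n → (Fin n → ℝ) → ℝ} {T : Fin n → (Fin n → ℝ) → ℝ}
    {R : (Fin n → ℝ) → ℝ} (hS : ∀ a b, Sm (S a b)) (hT : ∀ a, Sm (T a)) (hR : Sm R)
    {f g : (Fin n → ℝ) → ℝ} (hf : Sm f) (hfc : HasCompactSupport f)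
    (hg : Sm g) :
    ∫ x, secondOrderOp S T R f x * g x = ∫ x, Dop S T R g x * f x := by
  have e1 : ∀ x, secondOrderOp S T R f x * g x
      = (1/2) * (∑ a, ∑ b, (S a b x * g x) * pd a (pd b f) x)
        + ((∑ a, (T a x * g x) * pd a f x) + (R x * g x) * f x) := by
    intro x
    simp only [secondOrderOp, add_mul, mul_add, Finset.sum_mul, Finset.mul_sum,
      mul_assoc, mul_comm, mul_left_comm, add_assoc]
  have e2 : ∀ x, Dop S T R g x * f x
      = (1/2) * (∑ a, ∑ b, pd b (pd a (fun z => S a b z * g z)) x * f x)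
        + ((∑ a, -(pd a (fun z => T a z * g z) x * f x)) + (R x * g x) * f x) := by
    intro x
    simp only [Dop, add_mul, mul_add, Finset.sum_mul, Finset.mul_sum, neg_mul, mul_neg,
      mul_assoc, mul_comm, mul_left_comm, add_assoc]
  have hPi : ∀ a b : Fin n, Integrable (fun x => (S a b x * g x) * pd a (pd b f) x) :=
    fun a b => intg (((hS a b).cont.mul hg.cont).mul (((hf.pd b).pd a).cont))
      ((pd_hcs (pd_hcs hfc b) a).mul_left)
  have hQi : ∀ a : Fin n, Integrable (fun x => (T a x * g x) * pd a f x) := fun a =>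
    intg (((hT a).cont.mul hg.cont).mul ((hf.pd a).cont)) ((pd_hcs hfc a).mul_left)
  have hZi : Integrable (fun x => (R x * g x) * f x) :=
    intg ((hR.cont.mul hg.cont).mul hf.cont) hfc.mul_left
  have hP'i : ∀ a b : Fin n,
      Integrable (fun x => pd b (pd a (fun z => S a b z * g z)) x * f x) := fun a b =>
    intg ((Sm.pd (Sm.pd ((hS a b).mul hg) a) b).cont.mul hf.cont) hfc.mul_left
  have hQ'i : ∀ a : Fin n,
      Integrable (fun x => -(pd a (fun z => T a z * g z) x * f x)) := fun a =>
    (intg ((Sm.pd ((hT a).mul hg) a).cont.mul hf.cont) hfc.mul_left).neg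
  have hPP : ∀ a b : Fin n, (∫ x, (S a b x * g x) * pd a (pd b f) x)
      = ∫ x, pd b (pd a (fun z => S a b z * g z)) x * f x := fun a b =>
    ibp2 ((hS a b).mul hg) hf hfc a b
  have hQQ : ∀ a : Fin n, (∫ x, (T a x * g x) * pd a f x)
      = ∫ x, -(pd a (fun z => T a z * g z) x * f x) := by
    intro a
    rw [integral_neg]
    exact ibp ((hT a).mul hg) hf hfc a
  simp only [e1, e2]
  rw [integral_expand _ _ _ hPi hQi hZi, integral_expand _ _ _ hP'i hQ'i hZi]
  simp only [hPP, hQQ]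

lemma Sm.sum {ι : Type*} {s : Finset ι} {f : ι → (Fin n → ℝ) → ℝ}
    (hf : ∀ i ∈ s, Sm (f i)) : Sm (fun x => ∑ i ∈ s, f i x) := by
  classical
  induction s using Finset.induction with
  | empty => simpa using contDiff_const
  | insert i s hns ih =>
    simp only [Finset.sum_insert hns]
    exact (hf i (Finset.mem_insert_self i s)).add
      (ih (fun j hj => hf j (Finset.mem_insert_of_mem hj)))

lemma Sm.dop {S : Fin n → Fin n → (Fin n → ℝ) → ℝ} {T : Fin n → (Fin n → ℝ) → ℝ}
    {R : (Fin n → ℝ) → ℝ} (hS : ∀ a b, Sm (S a b)) (hT : ∀ a, Sm (T a)) (hR : Sm R)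
    {g : (Fin n → ℝ) → ℝ} (hg : Sm g) : Sm (Dop S T R g) := by
  unfold Dop
  exact (contDiff_const.mul (Sm.sum fun a _ => Sm.sum fun b _ =>
      Sm.pd (Sm.pd ((hS a b).mul hg) a) b)).add
    ((Sm.sum fun a _ => (Sm.pd ((hT a).mul hg) a).neg).add (hR.mul hg))

lemma Sm.quad {S : Fin n → Fin n → (Fin n → ℝ) → ℝ} {T : Fin n → (Fin n → ℝ) → ℝ}
    {R α' β' κ'} (hS : ∀ a b, Sm (S a b)) (hT : ∀ a, Sm (T a)) (hR : Sm R)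
    (hα : ∀ a : Fin n, Sm (α' a)) (hβ : Sm β') (hκ : Sm κ') (w : ℝ)
    {g : (Fin n → ℝ) → ℝ} (hg : Sm g) : Sm (quadPencil S T R α' β' κ' w g) := by
  unfold quadPencil secondOrderOp
  exact ((((contDiff_const.mul (Sm.sum fun a _ => Sm.sum fun b _ =>
      (hS a b).mul (Sm.pd (Sm.pd hg b) a))).add
      (Sm.sum fun a _ => (hT a).mul (Sm.pd hg a))).add (hR.mul hg)).add
    (contDiff_const.mul ((Sm.sum fun a _ => (hα a).mul (Sm.pd hg a)).add
      (hβ.mul hg)))).add (contDiff_const.mul (hκ.mul hg))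

lemma quad_zero {S : Fin n → Fin n → (Fin n → ℝ) → ℝ} {T R α' β' κ'}
    (f : (Fin n → ℝ) → ℝ) :
    quadPencil S T R α' β' κ' 0 f = secondOrderOp S T R f := by
  funext x; simp [quadPencil]

lemma key {S : Fin n → Fin n → (Fin n → ℝ) → ℝ} {T : Fin n → (Fin n → ℝ) → ℝ}
    {R α β κ} (hS : ∀ a b, Sm (S a b)) (hT : ∀ a, Sm (T a)) (hR : Sm R)
    (hα : ∀ a : Fin n, Sm (α a)) (hβ : Sm β) (hκ : Sm κ)
    (hsa : ∀ (w : ℝ) (f g : (Fin n → ℝ) → ℝ),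
      ContDiff ℝ (⊤ : ℕ∞) f → HasCompactSupport f →
      ContDiff ℝ (⊤ : ℕ∞) g → HasCompactSupport g →
      ∫ x, quadPencil S T R α β κ w f x * g x
        = ∫ x, f x * quadPencil S T R α β κ (1 - w) g x)
    {g : (Fin n → ℝ) → ℝ} (hg : Sm g) (hgc : HasCompactSupport g) :
    ∀ x, Dop S T R g x = quadPencil S T R α β κ 1 g x := by
  set h : (Fin n → ℝ) → ℝ :=
    fun x => Dop S T R g x - quadPencil S T R α β κ 1 g x with hh
  have hDc : Continuous (Dop S T R g) := (Sm.dop hS hT hR hg).cont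
  have hQc : Continuous (quadPencil S T R α β κ 1 g) :=
    (Sm.quad hS hT hR hα hβ hκ 1 hg).cont
  have hcont : Continuous h := hDc.sub hQc
  have hae : ∀ᵐ x ∂(volume : Measure (Fin n → ℝ)), h x = 0 := by
    apply ae_eq_zero_of_integral_contDiff_smul_eq_zero hcont.locallyIntegrable
    intro f hf hfc
    have hint1 : Integrable (fun x => f x * Dop S T R g x) :=
      intg (hf.continuous.mul hDc) (hfc.mul_right)
    have hint2 : Integrable (fun x => f x * quadPencil S T R α β κ 1 g x) :=
      intg (hf.continuous.mul hQc) (hfc.mul_right)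
    have e0 : ∫ x, f x * Dop S T R g x = ∫ x, f x * quadPencil S T R α β κ 1 g x := by
      have h1 : ∫ x, f x * Dop S T R g x = ∫ x, secondOrderOp S T R f x * g x := by
        rw [adjoint hS hT hR hf hfc hg]
        simp only [mul_comm]
      have h2 := hsa 0 f g hf hfc hg hgc
      rw [quad_zero f] at h2
      rw [h1, h2]
      norm_num
    simp only [smul_eq_mul, hh, mul_sub]
    rw [integral_sub hint1 hint2, e0, sub_self]
  have : h = fun _ => 0 := by
    rw [← Continuous.ae_eq_iff_eq volume hcont continuous_const]
    exact hae
  intro x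
  have := congrFun this x
  simpa [hh, sub_eq_zero] using this

lemma dop_eq {S : Fin n → Fin n → (Fin n → ℝ) → ℝ} {T : Fin n → (Fin n → ℝ) → ℝ}
    {R : (Fin n → ℝ) → ℝ} (hS : ∀ a b, Sm (S a b)) (hSsym : ∀ a b, S a b = S b a)
    (hT : ∀ a, Sm (T a)) {g : (Fin n → ℝ) → ℝ} (hg : Sm g) (x : Fin n → ℝ) :
    Dop S T R g x = secondOrderOp S T R g x
      + ((∑ a, ((∑ b, pd b (S b a) x) - 2 * T a x) * pd a g x)
        + ((1/2) * (∑ a, ∑ b, pd a (pd b (S b a)) x) - (∑ a, pd a (T a) x)) * g x) := by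
  have hpd1 : ∀ a b : Fin n, pd b (pd a (fun z => S a b z * g z)) x
      = pd b (pd a (S a b)) x * g x + pd a (S a b) x * pd b g x
        + (pd b (S a b) x * pd a g x + S a b x * pd b (pd a g) x) := by
    intro a b
    rw [pd_mul (hS a b).diff hg.diff a,
      pd_add (f := fun y => pd a (S a b) y * g y) (g := fun y => S a b y * pd a g y)
        (((hS a b).pd a).diff.mul hg.diff) ((hS a b).diff.mul (hg.pd a).diff) b,
      pd_mul ((hS a b).pd a).diff hg.diff b, pd_mul (hS a b).diff (hg.pd a).diff b]
  have hpdT : ∀ a : Fin n, pd a (fun z => T a z * g z) x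
      = pd a (T a) x * g x + T a x * pd a g x := fun a => by
    rw [pd_mul (hT a).diff hg.diff a]
  have swap1 : ∑ a, ∑ b, pd b (pd a (S a b)) x * g x
      = (∑ a, ∑ b, pd a (pd b (S b a)) x) * g x := by
    rw [Finset.sum_comm, Finset.sum_mul]
    exact Finset.sum_congr rfl fun a _ => (Finset.sum_mul _ _ _).symm
  have swap2 : ∑ a, ∑ b, pd a (S a b) x * pd b g x
      = ∑ a, (∑ b, pd b (S b a) x) * pd a g x := by
    rw [Finset.sum_comm]
    exact Finset.sum_congr rfl fun a _ => (Finset.sum_mul _ _ _).symm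
  have swap3 : ∑ a, ∑ b, pd b (S a b) x * pd a g x
      = ∑ a, (∑ b, pd b (S b a) x) * pd a g x := by
    refine Finset.sum_congr rfl fun a _ => ?_
    rw [Finset.sum_mul]
    exact Finset.sum_congr rfl fun b _ => by rw [hSsym a b]
  have swap4 : ∑ a, ∑ b, S a b x * pd b (pd a g) x
      = ∑ a, ∑ b, S a b x * pd a (pd b g) x := by
    rw [Finset.sum_comm]
    exact Finset.sum_congr rfl fun a _ => Finset.sum_congr rfl fun b _ => by
      rw [hSsym b a]
  simp only [Dop, secondOrderOp, hpd1, hpdT, Finset.sum_add_distrib, neg_add,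
    Finset.sum_neg_distrib]
  rw [swap1, swap2, swap3, swap4]
  rw [show (∑ a : Fin n, ((∑ b, pd b (S b a) x) - 2 * T a x) * pd a g x)
      = (∑ a, (∑ b, pd b (S b a) x) * pd a g x) - 2 * ∑ a, T a x * pd a g x from by
    rw [Finset.mul_sum, ← Finset.sum_sub_distrib]
    exact Finset.sum_congr rfl fun a _ => by ring]
  rw [show (∑ a : Fin n, pd a (T a) x * g x) = (∑ a, pd a (T a) x) * g x from
    (Finset.sum_mul _ _ _).symm]
  ring

lemma vanish {S : Fin n → Fin n → (Fin n → ℝ) → ℝ} {T : Fin n → (Fin n → ℝ) → ℝ}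
    {R α β κ} (hS : ∀ a b, Sm (S a b)) (hSsym : ∀ a b, S a b = S b a)
    (hT : ∀ a, Sm (T a)) (hR : Sm R)
    (hα : ∀ a : Fin n, Sm (α a)) (hβ : Sm β) (hκ : Sm κ)
    (hsa : ∀ (w : ℝ) (f g : (Fin n → ℝ) → ℝ),
      ContDiff ℝ (⊤ : ℕ∞) f → HasCompactSupport f →
      ContDiff ℝ (⊤ : ℕ∞) g → HasCompactSupport g →
      ∫ x, quadPencil S T R α β κ w f x * g x
        = ∫ x, f x * quadPencil S T R α β κ (1 - w) g x)
    {g : (Fin n → ℝ) → ℝ} (hg : Sm g) (hgc : HasCompactSupport g) (x : Fin n → ℝ) :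
    (∑ a, (((∑ b, pd b (S b a) x) - 2 * T a x) - α a x) * pd a g x)
      + (((1/2) * (∑ a, ∑ b, pd a (pd b (S b a)) x) - (∑ a, pd a (T a) x))
          - (β x + κ x)) * g x = 0 := by
  have h1 := key hS hT hR hα hβ hκ hsa hg hgc x
  rw [dop_eq hS hSsym hT hg x] at h1
  have h2 : quadPencil S T R α β κ 1 g x
      = secondOrderOp S T R g x + ((∑ a, α a x * pd a g x) + β x * g x)
        + κ x * g x := by
    simp [quadPencil]
  rw [h2] at h1
  have h3 : ∑ a, (((∑ b, pd b (S b a) x) - 2 * T a x) - α a x) * pd a g x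
      = (∑ a, ((∑ b, pd b (S b a) x) - 2 * T a x) * pd a g x)
        - ∑ a, α a x * pd a g x := by
    rw [← Finset.sum_sub_distrib]
    exact Finset.sum_congr rfl fun a _ => by ring
  rw [h3]
  ring_nf
  ring_nf at h1
  linarith [h1]

lemma exists_bump (x0 : Fin n → ℝ) : ∃ χ : (Fin n → ℝ) → ℝ, Sm χ ∧ HasCompactSupport χ
    ∧ χ x0 = 1 ∧ (∀ a, pd a χ x0 = 0) := by
  let φ : ContDiffBump x0 := ⟨1, 2, one_pos, one_lt_two⟩
  refine ⟨⇑φ, φ.contDiff, φ.hasCompactSupport, φ.one_of_mem_closedBall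
    (Metric.mem_closedBall_self φ.rIn_pos.le), fun a => ?_⟩
  have hev : ⇑φ =ᶠ[nhds x0] fun _ => (1:ℝ) := by
    filter_upwards [Metric.ball_mem_nhds x0 φ.rIn_pos] with y hy
    exact φ.one_of_mem_closedBall (Metric.ball_subset_closedBall hy)
  simp only [pd]
  rw [Filter.EventuallyEq.fderiv_eq hev]
  simp

lemma exists_lin (x0 : Fin n → ℝ) (a0 : Fin n) :
    ∃ ℓ : (Fin n → ℝ) → ℝ, Sm ℓ ∧ HasCompactSupport ℓ ∧ ℓ x0 = 0
      ∧ pd a0 ℓ x0 = 1 ∧ (∀ b, b ≠ a0 → pd b ℓ x0 = 0) := by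
  let φ : ContDiffBump x0 := ⟨1, 2, one_pos, one_lt_two⟩
  have hproj : ContDiff ℝ (⊤ : ℕ∞) (fun x : Fin n → ℝ => x a0) :=
    (ContinuousLinearMap.proj (R := ℝ) (φ := fun _ : Fin n => ℝ) a0).contDiff
  refine ⟨fun x => (x a0 - x0 a0) * φ x, (hproj.sub contDiff_const).mul φ.contDiff,
    φ.hasCompactSupport.mul_left, by simp, ?_, ?_⟩ <;>
  · have hev : (fun x : Fin n → ℝ => (x a0 - x0 a0) * φ x)
        =ᶠ[nhds x0] fun x => x a0 - x0 a0 := by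
      filter_upwards [Metric.ball_mem_nhds x0 φ.rIn_pos] with y hy
      rw [φ.one_of_mem_closedBall (Metric.ball_subset_closedBall hy), mul_one]
    have hfd : ∀ b : Fin n, pd b (fun x : Fin n → ℝ => (x a0 - x0 a0) * φ x) x0
        = (Pi.single b (1:ℝ) : Fin n → ℝ) a0 := by
      intro b
      simp only [pd]
      rw [Filter.EventuallyEq.fderiv_eq hev]
      have : (fun x : Fin n → ℝ => x a0 - x0 a0)
          = fun x => (ContinuousLinearMap.proj (R := ℝ) (φ := fun _ : Fin n => ℝ) a0) x
            - x0 a0 := rfl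
      rw [this, fderiv_sub_const, ContinuousLinearMap.fderiv]
      rfl
    first
    | (rw [hfd a0]; simp)
    | (intro b hb; rw [hfd b]; simp [Pi.single_apply, hb])

/-- a self-adjoint quadratic pencil `Δ_w = Δ⁰ + wA + w²B` necessarily has
`α^a = γ^a := Σ_b ∂_b S^{ba} − 2T^a` and `β = (1/2)·Σ_a ∂_a γ^a − κ`, so that
`Δ_w = R·id + Δ_w^{can}` where `Δ_w^{can}` is the canonical pencil of `(S, γ, 2κ)`;
in particular if `Δ₀(1) = 0` the pencil is exactly that canonical pencil. -/
theorem selfAdjoint_quadPencil_is_canonical {n : ℕ}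
    (S : Fin n → Fin n → (Fin n → ℝ) → ℝ)
    (T : Fin n → (Fin n → ℝ) → ℝ) (R : (Fin n → ℝ) → ℝ)
    (α : Fin n → (Fin n → ℝ) → ℝ) (β κ : (Fin n → ℝ) → ℝ)
    (hS : ∀ a b, ContDiff ℝ (⊤ : ℕ∞) (S a b)) (hSsym : ∀ a b, S a b = S b a)
    (hT : ∀ a, ContDiff ℝ (⊤ : ℕ∞) (T a)) (hR : ContDiff ℝ (⊤ : ℕ∞) R)
    (hα : ∀ a, ContDiff ℝ (⊤ : ℕ∞) (α a)) (hβ : ContDiff ℝ (⊤ : ℕ∞) β)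
    (hκ : ContDiff ℝ (⊤ : ℕ∞) κ)
    (hsa : ∀ (w : ℝ) (f g : (Fin n → ℝ) → ℝ),
      ContDiff ℝ (⊤ : ℕ∞) f → HasCompactSupport f →
      ContDiff ℝ (⊤ : ℕ∞) g → HasCompactSupport g →
      ∫ x, quadPencil S T R α β κ w f x * g x
        = ∫ x, f x * quadPencil S T R α β κ (1 - w) g x) :
    (∀ a x, α a x = (∑ b, pd b (S b a) x) - 2 * T a x)
    ∧ (∀ x, β x
        = (1/2) * (∑ a, pd a (fun z => (∑ b, pd b (S b a) z) - 2 * T a z) x) - κ x)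
    ∧ (∀ (w : ℝ) (f : (Fin n → ℝ) → ℝ), ContDiff ℝ (⊤ : ℕ∞) f → ∀ x,
        quadPencil S T R α β κ w f x
          = R x * f x
            + canonicalPencil S (fun a z => (∑ b, pd b (S b a) z) - 2 * T a z)
                (fun z => 2 * κ z) w f x)
    ∧ ((∀ x, secondOrderOp S T R (fun _ => 1) x = 0) →
        ∀ (w : ℝ) (f : (Fin n → ℝ) → ℝ), ContDiff ℝ (⊤ : ℕ∞) f → ∀ x,
          quadPencil S T R α β κ w f x
            = canonicalPencil S (fun a z => (∑ b, pd b (S b a) z) - 2 * T a z)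
                (fun z => 2 * κ z) w f x) := by
  have conc1 : ∀ a x, α a x = (∑ b, pd b (S b a) x) - 2 * T a x := by
    intro a x
    obtain ⟨ℓ, hℓsm, hℓcs, hℓ0, hℓa, hℓb⟩ := exists_lin x a
    have hv := vanish hS hSsym hT hR hα hβ hκ hsa hℓsm hℓcs x
    rw [hℓ0, mul_zero, add_zero] at hv
    rw [Finset.sum_eq_single a (fun b _ hb => by rw [hℓb b hb, mul_zero])
      (fun h => absurd (Finset.mem_univ a) h)] at hv
    rw [hℓa, mul_one, sub_eq_zero] at hv
    exact hv.symm
  have conc2 : ∀ x, β x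
      = (1/2) * (∑ a, pd a (fun z => (∑ b, pd b (S b a) z) - 2 * T a z) x) - κ x := by
    intro x
    obtain ⟨χ, hχsm, hχcs, hχ1, hχd⟩ := exists_bump x
    have hv := vanish hS hSsym hT hR hα hβ hκ hsa hχsm hχcs x
    rw [Finset.sum_eq_zero (fun a _ => by rw [hχd a, mul_zero]), hχ1, mul_one,
      zero_add] at hv
    have hexp : ∀ a : Fin n, pd a (fun z => (∑ b, pd b (S b a) z) - 2 * T a z) x
        = (∑ b, pd a (pd b (S b a)) x) - 2 * pd a (T a) x := by
      intro a
      rw [pd_sub (Sm.diff (Sm.sum fun b _ => Sm.pd (hS b a) b)) ((Sm.diff (hT a)).const_mul 2) a]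
      rw [pd_sum Finset.univ _ (fun b _ => Sm.diff (Sm.pd (hS b a) b)) a,
        pd_const_mul (Sm.diff (hT a)) a 2]
    rw [show (∑ a, pd a (fun z => (∑ b, pd b (S b a) z) - 2 * T a z) x)
        = (∑ a, ∑ b, pd a (pd b (S b a)) x) - 2 * ∑ a, pd a (T a) x from by
      rw [Finset.mul_sum, ← Finset.sum_sub_distrib]
      exact Finset.sum_congr rfl fun a _ => hexp a]
    linarith [hv]
  have conc3 : ∀ (w : ℝ) (f : (Fin n → ℝ) → ℝ), ∀ x,
      quadPencil S T R α β κ w f x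
        = R x * f x
          + canonicalPencil S (fun a z => (∑ b, pd b (S b a) z) - 2 * T a z)
              (fun z => 2 * κ z) w f x := by
    intro w f x
    simp only [quadPencil, secondOrderOp, canonicalPencil, conc1, conc2]
    rw [show (∑ a, ((∑ b, pd b (S b a) x)
          + (2 * w - 1) * ((∑ b, pd b (S b a) x) - 2 * T a x)) * pd a f x)
        = (∑ a, (2 * (T a x * pd a f x)
          + 2 * (w * (((∑ b, pd b (S b a) x) - 2 * T a x) * pd a f x)))) from
      Finset.sum_congr rfl fun a _ => by ring]
    rw [Finset.sum_add_distrib, ← Finset.mul_sum, ← Finset.mul_sum, ← Finset.mul_sum]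
    ring
  refine ⟨conc1, conc2, fun w f _ x => conc3 w f x, fun hΔ0 w f _ x => ?_⟩
  have hR0 : ∀ x, R x = 0 := by
    intro x
    have := hΔ0 x
    simpa [secondOrderOp, pd_const] using this
  rw [conc3 w f x, hR0 x, zero_mul, zero_add]
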